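/- Let X be a compact Hausdorff space, Y ⊆ X closed, n a positive integer, p₀ ∈ C(Y, M_n) and q ∈ C(X, M_n) projections with p₀(x) ⊥ q(x) for all x ∈ Y. Then there exist a closed set Z ⊆ X with Y ⊆ int(Z) and a projection p ∈ C(Z, M_n) such that p|_Y = p₀ and p(x) ⊥ q(x) for all x ∈ Z. -/

import Mathlib

/-- The n×n complex matrices. -/
abbrev Mat (n : ℕ) := Matrix (Fin n) (Fin n) ℂ

/-- A projection in `M_n(ℂ)`: a self-adjoint idempotent. -/
def IsProjMat {n : ℕ} (m : Mat n) : Prop := m * m = m ∧ star m = m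

lemma euclidean_nontrivial {n : ℕ} (hn : 0 < n) : Nontrivial (EuclideanSpace ℂ (Fin n)) := by
  refine ⟨0, (EuclideanSpace.single ⟨0, hn⟩ 1 : EuclideanSpace ℂ (Fin n)), ?_⟩
  intro hcon
  have := congrFun (congrArg (fun v : EuclideanSpace ℂ (Fin n) => (v : Fin n → ℂ)) hcon) ⟨0, hn⟩
  simp [EuclideanSpace.single] at this

abbrev BOp (n : ℕ) := EuclideanSpace ℂ (Fin n) →L[ℂ] EuclideanSpace ℂ (Fin n)
noncomputable instance (n : ℕ) : ContinuousStar (BOp n) := ⟨ContinuousLinearMap.adjoint.continuous⟩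
noncomputable def LL (n : ℕ) : Mat n ≃⋆ₐ[ℂ] BOp n := Matrix.toEuclideanCLM
noncomputable def eLL (n : ℕ) : Mat n ≃ₗ[ℂ] BOp n where
  toFun := LL n
  invFun := (LL n).symm
  left_inv := fun m => (LL n).symm_apply_apply m
  right_inv := fun b => (LL n).apply_symm_apply b
  map_add' := map_add _
  map_smul' := map_smul _
lemma LL_cont (n : ℕ) : Continuous (LL n) :=
  (eLL n).toLinearMap.continuous_of_finiteDimensional
lemma LL_symm_cont (n : ℕ) : Continuous (LL n).symm := by
  haveI : FiniteDimensional ℂ (BOp n) := (eLL n).finiteDimensional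
  exact (eLL n).symm.toLinearMap.continuous_of_finiteDimensional


section Helpers
variable {n : ℕ}
private lemma bstar_sub (a b : BOp n) : star (a - b) = star a - star b := star_sub a b
private lemma bstar_add (a b : BOp n) : star (a + b) = star a + star b := star_add a b
private lemma bstar_neg (a : BOp n) : star (-a) = -star a := star_neg a
private lemma bstar_one : star (1 : BOp n) = 1 := star_one _
private lemma bmul_neg (a b : BOp n) : a * -b = -(a * b) := mul_neg a b
private lemma bneg_neg (a : BOp n) : -(-a) = a := neg_neg a
private lemma badd_neg (a : BOp n) : a + -a = 0 := add_neg_cancel a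
end Helpers

section Ops
variable {X : Type*} [TopologicalSpace X] {n : ℕ}

noncomputable def oQ (n : ℕ) (q : C(X, Mat n)) (x : X) : BOp n := LL n (q x)
noncomputable def oH (n : ℕ) (g : C(X, Mat n)) (x : X) : BOp n :=
  (2:ℂ)⁻¹ • (LL n (g x) + star (LL n (g x)))
noncomputable def oA (n : ℕ) (q g : C(X, Mat n)) (x : X) : BOp n :=
  (1 - oQ n q x) * oH n g x * (1 - oQ n q x)
noncomputable def oU (n : ℕ) (q g : C(X, Mat n)) (x : X) : BOp n :=
  oA n q g x + oA n q g x - 1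
noncomputable def oE (n : ℕ) (q g : C(X, Mat n)) (x : X) : BOp n :=
  oU n q g x * oU n q g x - 1

variable (q g : C(X, Mat n))

lemma oQ_mul_oQ (hq : ∀ x, IsProjMat (q x)) (x : X) : oQ n q x * oQ n q x = oQ n q x := by
  rw [oQ, ← map_mul, (hq x).1]
lemma oQ_star (hq : ∀ x, IsProjMat (q x)) (x : X) : star (oQ n q x) = oQ n q x := by
  rw [oQ, ← map_star, (hq x).2]
lemma oH_star (x : X) : star (oH n g x) = oH n g x := by
  simp only [oH, star_smul, star_add, bstar_add, star_star]
  have h2 : star ((2:ℂ)⁻¹) = (2:ℂ)⁻¹ := by simp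
  rw [h2, add_comm (star (LL n (g x)))]
lemma oA_star (hq : ∀ x, IsProjMat (q x)) (x : X) : star (oA n q g x) = oA n q g x := by
  simp only [oA, star_mul, bstar_sub, bstar_one, oQ_star q hq, oH_star, mul_assoc]
lemma sub_one_mul_oQ (hq : ∀ x, IsProjMat (q x)) (x : X) :
    (1 - oQ n q x) * oQ n q x = 0 := by
  rw [sub_mul, one_mul, oQ_mul_oQ q hq x, sub_self]
lemma oQ_mul_sub_one (hq : ∀ x, IsProjMat (q x)) (x : X) :
    oQ n q x * (1 - oQ n q x) = 0 := by
  rw [mul_sub, mul_one, oQ_mul_oQ q hq x, sub_self]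
lemma oA_mul_oQ (hq : ∀ x, IsProjMat (q x)) (x : X) : oA n q g x * oQ n q x = 0 := by
  rw [oA, mul_assoc ((1 - oQ n q x) * oH n g x), sub_one_mul_oQ q hq, mul_zero]
lemma oQ_mul_oA (hq : ∀ x, IsProjMat (q x)) (x : X) : oQ n q x * oA n q g x = 0 := by
  rw [oA, ← mul_assoc, ← mul_assoc, oQ_mul_sub_one q hq, zero_mul, zero_mul]
lemma oU_star (hq : ∀ x, IsProjMat (q x)) (x : X) : star (oU n q g x) = oU n q g x := by
  rw [oU, bstar_sub, bstar_add, oA_star q g hq, bstar_one]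
lemma oE_star (hq : ∀ x, IsProjMat (q x)) (x : X) : star (oE n q g x) = oE n q g x := by
  rw [oE, bstar_sub, star_mul, oU_star q g hq, bstar_one]
lemma oU_mul_oQ (hq : ∀ x, IsProjMat (q x)) (x : X) :
    oU n q g x * oQ n q x = -oQ n q x := by
  rw [oU, sub_mul, add_mul, oA_mul_oQ q g hq, one_mul, add_zero, zero_sub]
lemma oE_mul_oQ (hq : ∀ x, IsProjMat (q x)) (x : X) : oE n q g x * oQ n q x = 0 := by
  rw [oE, sub_mul, one_mul, mul_assoc, oU_mul_oQ q g hq, bmul_neg, oU_mul_oQ q g hq,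
    bneg_neg, sub_self]
lemma oU_commute_oE (x : X) : Commute (oU n q g x) (oE n q g x) := by
  rw [oE]
  exact ((Commute.refl _).mul_right (Commute.refl _)).sub_right (Commute.one_right _)
lemma oU_sq (x : X) : oU n q g x * oU n q g x = 1 + oE n q g x := by
  rw [oE]; abel

lemma oQ_cont : Continuous (oQ n q) := (LL_cont n).comp q.continuous
lemma oH_cont : Continuous (oH n g) := by
  have h : Continuous fun x => LL n (g x) := (LL_cont n).comp g.continuous
  exact (h.add h.star).const_smul ((2:ℂ)⁻¹)
lemma oA_cont : Continuous (oA n q g) :=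
  ((continuous_const.sub (oQ_cont q)).mul (oH_cont g)).mul (continuous_const.sub (oQ_cont q))
lemma oU_cont : Continuous (oU n q g) :=
  ((oA_cont q g).add (oA_cont q g)).sub continuous_const
lemma oE_cont : Continuous (oE n q g) :=
  ((oU_cont q g).mul (oU_cont q g)).sub continuous_const

-- behavior at points where g agrees with a projection orthogonal to q
variable {q g}

lemma oA_eq (hq : ∀ x, IsProjMat (q x)) {x : X} {m : Mat n} (hm : g x = m)
    (hmp : IsProjMat m) (hmq : m * q x = 0) : oA n q g x = LL n m := by
  have hqm : q x * m = 0 := by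
    have := congrArg star hmq
    rwa [star_mul, hmp.2, (hq x).2, star_zero] at this
  have hH : oH n g x = LL n m := by
    rw [oH, hm, ← map_star, hmp.2, ← two_smul ℂ, smul_smul]
    norm_num
  have h1 : LL n m * oQ n q x = 0 := by rw [oQ, ← map_mul, hmq, map_zero]
  have h2 : oQ n q x * LL n m = 0 := by rw [oQ, ← map_mul, hqm, map_zero]
  rw [oA, hH, sub_mul, one_mul, h2, sub_zero, mul_sub, mul_one, h1, sub_zero]

lemma oE_eq_zero (hq : ∀ x, IsProjMat (q x)) {x : X} {m : Mat n} (hm : g x = m)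
    (hmp : IsProjMat m) (hmq : m * q x = 0) : oE n q g x = 0 := by
  have hPP : LL n m * LL n m = LL n m := by rw [← map_mul, hmp.1]
  have hUx : oU n q g x = LL n m + LL n m - 1 := by rw [oU, oA_eq hq hm hmp hmq]
  have h1 : oU n q g x * oU n q g x = 1 := by
    rw [hUx]
    simp only [sub_mul, add_mul, mul_sub, mul_add, mul_one, one_mul, hPP]
    abel
  rw [oE, h1, sub_self]

lemma oU_eq (hq : ∀ x, IsProjMat (q x)) {x : X} {m : Mat n} (hm : g x = m)
    (hmp : IsProjMat m) (hmq : m * q x = 0) :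
    (1 : BOp n) + oU n q g x = LL n m + LL n m := by
  rw [oU, oA_eq hq hm hmp hmq]; abel

end Ops

open Polynomial in
private lemma descPoch_smeval_succ (r : ℝ) (k : ℕ) :
    (descPochhammer ℤ (k+1)).smeval r = (descPochhammer ℤ k).smeval r * (r - k) := by
  rw [descPochhammer_succ_right, Polynomial.smeval_mul]
  congr 1
  simp [Polynomial.smeval_sub, Polynomial.smeval_X, Polynomial.smeval_natCast]

private lemma ringChoose_succ (r : ℝ) (k : ℕ) :
    (k+1 : ℝ) * Ring.choose r (k+1) = Ring.choose r k * (r - k) := by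
  have hkk : (k.factorial : ℝ) ≠ 0 := by positivity
  have h1 : ((k:ℝ)+1) * (k.factorial : ℝ) * Ring.choose r (k+1)
      = ((k.factorial : ℝ) * Ring.choose r k) * (r - k) := by
    have h := Ring.descPochhammer_eq_factorial_smul_choose (R := ℝ) r (k+1)
    rw [descPoch_smeval_succ, Ring.descPochhammer_eq_factorial_smul_choose,
      Nat.factorial_succ] at h
    push_cast [nsmul_eq_mul] at h
    linear_combination -h
  refine mul_left_cancel₀ hkk ?_
  linear_combination h1

noncomputable def cc (k : ℕ) : ℝ := Ring.choose (-(2⁻¹):ℝ) k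

lemma cc_zero : cc 0 = 1 := Ring.choose_zero_right _

lemma abs_cc_le_one (k : ℕ) : |cc k| ≤ 1 := by
  induction k with
  | zero => simp [cc_zero]
  | succ k ih =>
    have h := ringChoose_succ (-(2⁻¹) : ℝ) k
    have hk : ((k:ℝ)+1) ≠ 0 := by positivity
    have heq : cc (k+1) = cc k * ((-(2⁻¹) - k) / ((k:ℝ)+1)) := by
      simp only [cc]
      rw [← mul_div_assoc, eq_div_iff hk]
      linear_combination h
    rw [heq, abs_mul]
    have habs : |(-(2⁻¹) - (k:ℝ)) / ((k:ℝ)+1)| ≤ 1 := by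
      rw [abs_div, abs_of_pos (by positivity : (0:ℝ) < (k:ℝ)+1), div_le_one (by positivity),
        abs_of_nonpos (by linarith [Nat.cast_nonneg (α := ℝ) k] : (-(2⁻¹) - (k:ℝ)) ≤ 0)]
      linarith [Nat.cast_nonneg (α := ℝ) k]
    calc |cc k| * |(-(2⁻¹) - (k:ℝ))/((k:ℝ)+1)| ≤ 1 * 1 :=
          mul_le_mul ih habs (abs_nonneg _) zero_le_one
    _ = 1 := by norm_num

private lemma ringChoose_neg_one (k : ℕ) : Ring.choose (-1 : ℝ) k = (-1)^k := by
  induction k with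
  | zero => simp [Ring.choose_zero_right]
  | succ k ih =>
    have h := ringChoose_succ (-1 : ℝ) k
    rw [ih] at h
    have hk : ((k:ℝ)+1) ≠ 0 := by positivity
    refine mul_left_cancel₀ hk ?_
    rw [h]; push_cast; ring

lemma cc_antidiag (k : ℕ) :
    ∑ ij ∈ Finset.HasAntidiagonal.antidiagonal k, cc ij.1 * cc ij.2 = (-1)^k := by
  have := Ring.add_choose_eq (r := (-(2⁻¹) : ℝ)) (s := (-(2⁻¹) : ℝ)) k (Commute.all _ _)
  rw [show (-(2⁻¹) + -(2⁻¹) : ℝ) = -1 by norm_num] at this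
  simp only [cc]
  rw [← this, ringChoose_neg_one]

section Series

variable {B : Type*} [NormedRing B] [CompleteSpace B] [NormOneClass B] [NormedAlgebra ℂ B]

/-- The inverse-square-root series `(1+M)^{-1/2}` as a `tsum`. -/
noncomputable def opS (M : B) : B := ∑' k, ((cc k : ℝ) : ℂ) • M ^ k

lemma norm_term_le (M : B) (hM : ‖M‖ ≤ 2⁻¹) (k : ℕ) :
    ‖((cc k : ℝ) : ℂ) • M ^ k‖ ≤ (2⁻¹ : ℝ) ^ k := by
  rw [norm_smul, Complex.norm_real, Real.norm_eq_abs]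
  calc |cc k| * ‖M ^ k‖ ≤ 1 * ‖M‖ ^ k :=
        mul_le_mul (abs_cc_le_one k) (norm_pow_le M k) (norm_nonneg _) zero_le_one
    _ ≤ (2⁻¹:ℝ)^k := by rw [one_mul]; exact pow_le_pow_left₀ (norm_nonneg _) hM k

lemma summable_geo : Summable fun k : ℕ => (2⁻¹ : ℝ) ^ k :=
  summable_geometric_of_lt_one (by norm_num) (by norm_num)

lemma summable_norm_term (M : B) (hM : ‖M‖ ≤ 2⁻¹) :
    Summable fun k => ‖((cc k : ℝ) : ℂ) • M ^ k‖ :=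
  summable_geo.of_nonneg_of_le (fun _ => norm_nonneg _) (norm_term_le M hM)

lemma summable_term (M : B) (hM : ‖M‖ ≤ 2⁻¹) :
    Summable fun k => ((cc k : ℝ) : ℂ) • M ^ k :=
  (summable_norm_term M hM).of_norm

lemma commute_opS (M T : B) (h : Commute T M) : Commute T (opS M) :=
  Commute.tsum_right _ fun k => (h.pow_right k).smul_right _

lemma opS_mul_opS (M : B) (hM : ‖M‖ ≤ 2⁻¹) : opS M * opS M * (1 + M) = 1 := by
  have hcauchy := tsum_mul_tsum_eq_tsum_sum_antidiagonal_of_summable_norm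
    (summable_norm_term M hM) (summable_norm_term M hM)
  have hterm : ∀ k : ℕ,
      (∑ ij ∈ Finset.HasAntidiagonal.antidiagonal k,
        (((cc ij.1 : ℝ) : ℂ) • M ^ ij.1) * (((cc ij.2 : ℝ) : ℂ) • M ^ ij.2))
      = (-M) ^ k := by
    intro k
    have h1 : ∀ ij ∈ Finset.HasAntidiagonal.antidiagonal k,
        (((cc ij.1 : ℝ) : ℂ) • M ^ ij.1) * (((cc ij.2 : ℝ) : ℂ) • M ^ ij.2)
          = ((cc ij.1 * cc ij.2 : ℝ) : ℂ) • M ^ k := by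
      intro ij hij
      rw [smul_mul_assoc, mul_smul_comm, smul_smul, ← pow_add,
        Finset.HasAntidiagonal.mem_antidiagonal.mp hij]
      norm_cast
    rw [Finset.sum_congr rfl h1, ← Finset.sum_smul, ← Complex.ofReal_sum, cc_antidiag k,
      show (-M) ^ k = ((-1 : ℂ) • M) ^ k by rw [neg_one_smul], smul_pow]
    norm_cast
  have hSS' : opS M * opS M = ∑' k, (-M) ^ k := by
    rw [opS, hcauchy, tsum_congr hterm]
  have hnormneg : ‖-M‖ < 1 := by
    rw [norm_neg]; exact lt_of_le_of_lt hM (by norm_num)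
  have hgeom := geom_series_mul_neg (-M) hnormneg
  rw [sub_neg_eq_add] at hgeom
  rw [hSS', hgeom]

lemma star_opS [StarRing B] [StarModule ℂ B] [ContinuousStar B] (M : B) (hM : star M = M) :
    star (opS M) = opS M := by
  rw [opS, tsum_star]
  exact tsum_congr fun k => by
    rw [star_smul, star_pow, hM, Complex.star_def, Complex.conj_ofReal]

lemma opS_mul_orth (M R : B) (hM : ‖M‖ ≤ 2⁻¹) (hMR : M * R = 0) : opS M * R = R := by
  rw [opS, ← (summable_term M hM).tsum_mul_right]
  have h1 : ∀ k : ℕ, (((cc k : ℝ) : ℂ) • M ^ k) * R = if k = 0 then R else 0 := by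
    intro k
    cases k with
    | zero => simp [cc_zero]
    | succ m =>
      rw [if_neg (Nat.succ_ne_zero m), smul_mul_assoc, pow_succ, mul_assoc,
        hMR, mul_zero, smul_zero]
  rw [tsum_congr h1, tsum_eq_single 0 (fun k hk => by rw [if_neg hk]), if_pos rfl]

lemma opS_zero : opS (0 : B) = 1 := by
  rw [opS, tsum_eq_single 0]
  · simp [cc_zero]
  · intro k hk
    rw [zero_pow hk, smul_zero]

lemma continuous_opS_comp {α : Type*} [TopologicalSpace α] (f : α → B)
    (hf : Continuous f) (hbd : ∀ a, ‖f a‖ ≤ 2⁻¹) :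
    Continuous fun a => opS (f a) :=
  continuous_tsum (fun k => ((hf.pow k).const_smul _)) summable_geo
    (fun k a => norm_term_le (f a) (hbd a) k)

end Series


section Abstract
variable {B : Type*} [Ring B] [Algebra ℂ B]

lemma proj_of (U S Eb : B) (hU2 : U * U = 1 + Eb) (hUS : Commute U S) (hES : Commute Eb S)
    (hSS : S * S * (1 + Eb) = 1) :
    ((2:ℂ)⁻¹ • (1 + U * S)) * ((2:ℂ)⁻¹ • (1 + U * S)) = (2:ℂ)⁻¹ • (1 + U * S) := by
  have hA2 : (U * S) * (U * S) = 1 := by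
    have h1 : (U * S) * (U * S) = (U * U) * (S * S) := by
      rw [mul_assoc, ← mul_assoc S U S, ← hUS.eq, mul_assoc U S S, ← mul_assoc]
    have hc : Commute (S * S) (1 + Eb) :=
      (Commute.one_right _).add_right (hES.symm.mul_left hES.symm)
    rw [h1, hU2, ← hc.eq, hSS]
  have hexp : (1 + U * S) * (1 + U * S) = 1 + U * S + (U * S + (U * S) * (U * S)) := by
    noncomm_ring
  rw [smul_mul_assoc, mul_smul_comm, smul_smul, hexp, hA2]
  have h2 : (1 : B) + U * S + (U * S + 1) = (2:ℂ) • (1 + U * S) := by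
    rw [two_smul]; abel
  rw [h2, smul_smul]
  norm_num

lemma star_of [StarRing B] [StarModule ℂ B] (U S : B) (hU : star U = U) (hS : star S = S)
    (hUS : Commute U S) : star ((2:ℂ)⁻¹ • (1 + U * S)) = (2:ℂ)⁻¹ • (1 + U * S) := by
  rw [star_smul, star_add, star_one, star_mul, hU, hS, ← hUS.eq]
  congr 1
  simp

lemma orth_of (U S Qb : B) (hUQ : U * Qb = -Qb) (hSQ : S * Qb = Qb) :
    ((2:ℂ)⁻¹ • (1 + U * S)) * Qb = 0 := by
  rw [smul_mul_assoc, add_mul, one_mul, mul_assoc, hSQ, hUQ, add_neg_cancel, smul_zero]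

lemma eq_of (U S P₀ : B) (hS : S = 1) (h1U : 1 + U = P₀ + P₀) :
    (2:ℂ)⁻¹ • (1 + U * S) = P₀ := by
  rw [hS, mul_one, h1U, ← two_smul ℂ, smul_smul]
  norm_num

end Abstract


set_option maxHeartbeats 2000000 in
theorem extend_orthogonal_projection_to_closed_nbhd
    {X : Type*} [TopologicalSpace X] [CompactSpace X] [T2Space X]
    (Y : Set X) (hY : IsClosed Y) (n : ℕ) (hn : 0 < n)
    (p₀ : C(Y, Mat n)) (hp₀ : ∀ y, IsProjMat (p₀ y))
    (q : C(X, Mat n)) (hq : ∀ x, IsProjMat (q x))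
    (horth : ∀ (x : X) (hx : x ∈ Y), p₀ ⟨x, hx⟩ * q x = 0) :
    ∃ Z : Set X, IsClosed Z ∧ Y ⊆ interior Z ∧
      ∃ p : C(Z, Mat n), (∀ z, IsProjMat (p z)) ∧
        (∀ (x : X) (hy : x ∈ Y) (hz : x ∈ Z), p ⟨x, hz⟩ = p₀ ⟨x, hy⟩) ∧
        (∀ (x : X) (hz : x ∈ Z), p ⟨x, hz⟩ * q x = 0) := by
  classical
  haveI : Nontrivial (EuclideanSpace ℂ (Fin n)) := euclidean_nontrivial hn
  obtain ⟨g, hg⟩ := p₀.exists_restrict_eq (X := X) hY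
  have hgY : ∀ (x : X) (hx : x ∈ Y), g x = p₀ ⟨x, hx⟩ := fun x hx =>
    DFunLike.congr_fun hg ⟨x, hx⟩
  refine ⟨{x | ‖oE n q g x‖ ≤ 2⁻¹}, isClosed_le (oE_cont q g).norm continuous_const, ?_, ?_⟩
  · intro y hy
    refine interior_maximal (fun x hx => le_of_lt hx)
      (isOpen_lt (oE_cont q g).norm continuous_const) ?_
    show ‖oE n q g y‖ < 2⁻¹
    rw [oE_eq_zero hq (hgY y hy) (hp₀ _) (horth y hy), norm_zero]
    norm_num
  · have hcont : Continuous fun z : {x | ‖oE n q g x‖ ≤ 2⁻¹} =>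
        (LL n).symm ((2:ℂ)⁻¹ • (1 + oU n q g z.1 * opS (oE n q g z.1))) := by
      refine (LL_symm_cont n).comp ?_
      refine Continuous.const_smul ?_ ((2:ℂ)⁻¹)
      refine continuous_const.add ?_
      exact ((oU_cont q g).comp continuous_subtype_val).mul
        (continuous_opS_comp _ ((oE_cont q g).comp continuous_subtype_val) (fun z => z.2))
    refine ⟨⟨fun z => (LL n).symm ((2:ℂ)⁻¹ • (1 + oU n q g z.1 * opS (oE n q g z.1))),
      hcont⟩, ?_, ?_, ?_⟩
    · intro z
      have hE : ‖oE n q g z.1‖ ≤ 2⁻¹ := z.2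
      constructor
      · show (LL n).symm _ * (LL n).symm _ = (LL n).symm _
        rw [← map_mul, proj_of _ _ _ (oU_sq q g z.1)
          (commute_opS _ _ (oU_commute_oE q g z.1))
          (commute_opS _ _ (Commute.refl _)) (opS_mul_opS _ hE)]
      · show star ((LL n).symm _) = (LL n).symm _
        rw [← show ∀ x, (LL n).symm (star x) = star ((LL n).symm x) from (LL n).symm.map_star', star_of _ _ (oU_star q g hq z.1)
          (star_opS _ (oE_star q g hq z.1)) (commute_opS _ _ (oU_commute_oE q g z.1))]
    · intro x hy hz
      show (LL n).symm ((2:ℂ)⁻¹ • (1 + oU n q g x * opS (oE n q g x))) = p₀ ⟨x, hy⟩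
      rw [oE_eq_zero hq (hgY x hy) (hp₀ _) (horth x hy), opS_zero,
        eq_of _ _ (LL n (p₀ ⟨x, hy⟩)) rfl (oU_eq hq (hgY x hy) (hp₀ _) (horth x hy)),
        StarAlgEquiv.symm_apply_apply]
    · intro x hz
      have hE : ‖oE n q g x‖ ≤ 2⁻¹ := hz
      show (LL n).symm ((2:ℂ)⁻¹ • (1 + oU n q g x * opS (oE n q g x))) * q x = 0
      have hqx : q x = (LL n).symm (oQ n q x) := ((LL n).symm_apply_apply (q x)).symm
      rw [hqx, ← map_mul, orth_of _ _ _ (oU_mul_oQ q g hq x)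
        (opS_mul_orth _ _ hE (oE_mul_oQ q g hq x)), map_zero]
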